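/- Let q ≥ 3 be a prime power, γ ∈ F_q^* of order t < q−1, β ∈ F_q^*, and α_1,...,α_m ∈ F_q^* pairwise distinct with each α_j ∉ β⟨γ⟩ and 2 ≤ m ≤ q−1−t. For the m-fold multisequence Z with σ_i^(j) = (α_j γ^i − β)^{q-2}, and for integers 1 ≤ k ≤ q−1 and n ≥ 1, N_k^(m)(Z,n) ≥ min( (mn−1)/(m+k), (δ_t m − 1)/k, t ). -/

import Mathlib

/-- `Z` satisfies a recursion of order `c` by a polynomial of degree at most `k`
in each variable, over the first `n` terms of each component sequence. -/
def SatisfiesNLRecursion {Fq : Type*} [Field Fq] {m : ℕ}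
    (Z : Fin m → ℕ → Fq) (k n c : ℕ) : Prop :=
  ∃ f : MvPolynomial (Fin c) Fq,
    (∀ s : Fin c, MvPolynomial.degreeOf s f ≤ k) ∧
    ∀ j : Fin m, ∀ i : ℕ, i + c < n →
      Z j (i + c) = MvPolynomial.eval (fun s : Fin c => Z j (i + s)) f

open scoped Classical in
/-- The `n`th joint nonlinear complexity of order `k` of the `m`-fold
multisequence `Z` over `F_q`. -/
noncomputable def jointNLC {Fq : Type*} [Field Fq] {m : ℕ}
    (Z : Fin m → ℕ → Fq) (k n : ℕ) : ℕ :=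
  if ∀ j : Fin m, ∀ i : ℕ, i < n → Z j i = 0 then 0
  else sInf {c : ℕ | SatisfiesNLRecursion Z k n c}


open scoped Classical in
/-- `‖ξ‖_t = b` if `ξ = γ^b` with `0 ≤ b < t`, and `‖ξ‖_t = t` if `ξ ∉ ⟨γ⟩`. -/
noncomputable def normT {Fq : Type*} [Field Fq] (γ : Fq) (t : ℕ) (ξ : Fq) : ℕ :=
  if ∃ b : ℕ, b < t ∧ ξ = γ ^ b then sInf {b : ℕ | ξ = γ ^ b} else t

/-- `δ_t`: the minimum of `‖α_{j1} α_{j2}⁻¹‖_t` over `j1 ≠ j2`. -/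
noncomputable def deltaT {Fq : Type*} [Field Fq] {m : ℕ}
    (γ : Fq) (t : ℕ) (α : Fin m → Fq) : ℕ :=
  sInf {d : ℕ | ∃ j1 j2 : Fin m, j1 ≠ j2 ∧ d = normT γ t (α j1 * (α j2)⁻¹)}

set_option linter.unusedSectionVars false

section Aux

open Polynomial

variable {Fq : Type*} [Field Fq] [Fintype Fq]

lemma normT_le_t (γ : Fq) (t : ℕ) (ξ : Fq) : normT γ t ξ ≤ t := by
  classical
  rw [normT]
  split_ifs with h
  · obtain ⟨b, hb, hξ⟩ := h
    exact le_trans (Nat.sInf_le hξ) hb.le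
  · exact le_rfl

lemma normT_le_of_eq_pow {γ : Fq} {t b : ℕ} {ξ : Fq} (hb : b < t) (hξ : ξ = γ ^ b) :
    normT γ t ξ ≤ b := by
  classical
  rw [normT, if_pos ⟨b, hb, hξ⟩]
  exact Nat.sInf_le hξ

variable (q : ℕ) (hq : q = Fintype.card Fq) (hq3 : 3 ≤ q)
  {m : ℕ} (hm2 : 2 ≤ m)
  (γ : Fq) (t : ℕ) (hγt : orderOf γ = t) (hγ0 : γ ≠ 0)
  (α : Fin m → Fq) (hα0 : ∀ j, α j ≠ 0) (hαinj : Function.Injective α)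
  (β : Fq) (hβ : β ≠ 0)
  (hcoset : ∀ j : Fin m, ∀ i : ℕ, α j ≠ β * γ ^ i)

include hγt hγ0 in
lemma ht_pos' : 0 < t := by
  subst hγt
  refine IsOfFinOrder.orderOf_pos ?_
  refine isOfFinOrder_iff_pow_eq_one.2
    ⟨Fintype.card Fq - 1, ?_, FiniteField.pow_card_sub_one_eq_one γ hγ0⟩
  have h1 : 1 < Fintype.card Fq := Fintype.one_lt_card
  omega

include hγt hγ0 in
lemma pow_inj' {a b : ℕ} (ha : a < t) (hb : b < t) (hab : γ ^ a = γ ^ b) : a = b := by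
  wlog h : a ≤ b generalizing a b
  · exact (this hb ha hab.symm (by omega)).symm
  have h1 : γ ^ a * γ ^ (b - a) = γ ^ a * 1 := by
    rw [← pow_add, mul_one, show a + (b - a) = b by omega]
    exact hab.symm
  have h2 : γ ^ (b - a) = 1 := mul_left_cancel₀ (pow_ne_zero a hγ0) h1
  have h3 : t ∣ b - a := hγt ▸ orderOf_dvd_of_pow_eq_one h2
  rcases Nat.eq_zero_or_pos (b - a) with h4 | h4
  · omega
  · exact absurd (Nat.le_of_dvd h4 h3) (by omega)

include hγt hγ0 hcoset in
lemma hne' (j : Fin m) (i : ℕ) : α j * γ ^ i - β ≠ 0 := by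
  have ht0 : 0 < t := ht_pos' γ t hγt hγ0
  intro h
  have h1 : α j * γ ^ i = β := by linear_combination h
  have h2 : γ ^ i * γ ^ (i * (t - 1)) = 1 := by
    rw [← pow_add]
    have h3 : i + i * (t - 1) = t * i := by
      cases t with
      | zero => omega
      | succ t =>
        rw [Nat.succ_sub_one]
        ring
    have h4 : γ ^ t = 1 := by rw [← hγt]; exact pow_orderOf_eq_one γ
    rw [h3, pow_mul, h4, one_pow]
  exact hcoset j (i * (t - 1)) (by
    calc α j = α j * (γ ^ i * γ ^ (i * (t - 1))) := by rw [h2, mul_one]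
    _ = β * γ ^ (i * (t - 1)) := by rw [← mul_assoc, h1])

include hm2 in
lemma deltaT_le_t : deltaT γ t α ≤ t := by
  have hne01 : (⟨0, by omega⟩ : Fin m) ≠ ⟨1, by omega⟩ := by
    intro h; simpa using congrArg Fin.val h
  exact le_trans (Nat.sInf_le ⟨_, _, hne01, rfl⟩) (normT_le_t γ t _)

include hq hq3 in
lemma pow_q2_eq_inv {x : Fq} (hx : x ≠ 0) : x ^ (q - 2) = x⁻¹ := by
  refine eq_inv_of_mul_eq_one_left ?_
  have h : x ^ (q - 2) * x = x ^ (q - 1) := by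
    rw [← pow_succ]
    congr 1
    omega
  rw [h, hq]
  exact FiniteField.pow_card_sub_one_eq_one x hx

include hq hq3 hm2 hγt hγ0 hα0 hαinj hβ hcoset in
lemma core_bound (k n c : ℕ) (hct : c < t)
    (hsat : SatisfiesNLRecursion
      (fun (j : Fin m) (i : ℕ) => (α j * γ ^ i - β) ^ (q - 2)) k n c) :
    m * min (n - c) (deltaT γ t α) ≤ c * k + 1 := by
  classical
  obtain ⟨f, hdeg, hrec⟩ := hsat
  set δ := deltaT γ t α with hδ
  set L := min (n - c) δ with hL
  have hδt : δ ≤ t := deltaT_le_t hm2 γ t α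
  have hLt : L ≤ t := le_trans (min_le_right _ _) hδt
  have hLn : L ≤ n - c := min_le_left _ _
  have hLδ : L ≤ δ := min_le_right _ _
  set P : Fq[X] := ∑ e ∈ f.support,
      C (MvPolynomial.coeff e f) * ∏ s : Fin c, (C (γ ^ (s : ℕ)) * X - C β) ^ (k - e s) with hP
  set G : Fq[X] := (C (γ ^ c) * X - C β) * P - ∏ s : Fin c, (C (γ ^ (s : ℕ)) * X - C β) ^ k
    with hG
  have hlin : ∀ a : Fq, (C a * X - C β).natDegree ≤ 1 := by
    intro a
    refine le_trans (natDegree_sub_le _ _) (max_le ?_ ?_)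
    · exact le_trans (natDegree_C_mul_le a X) (by simp)
    · simp
  -- degree bound for G
  have hPdeg : P.natDegree ≤ c * k := by
    rw [hP]
    refine le_trans (Polynomial.natDegree_sum_le _ _) ?_
    rw [Finset.fold_max_le]
    refine ⟨by omega, fun e _ => ?_⟩
    simp only [Function.comp_apply]
    refine le_trans natDegree_mul_le ?_
    rw [natDegree_C, zero_add]
    refine le_trans (Polynomial.natDegree_prod_le _ _) ?_
    calc ∑ s : Fin c, ((C (γ ^ (s : ℕ)) * X - C β) ^ (k - e s)).natDegree
        ≤ ∑ _s : Fin c, k := by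
          refine Finset.sum_le_sum fun s _ => ?_
          refine le_trans Polynomial.natDegree_pow_le ?_
          calc (k - e s) * (C (γ ^ (s : ℕ)) * X - C β).natDegree ≤ (k - e s) * 1 :=
            Nat.mul_le_mul_left _ (hlin _)
          _ ≤ k := by omega
      _ = c * k := by simp [mul_comm]
  have hGdeg : G.natDegree ≤ c * k + 1 := by
    rw [hG]
    refine le_trans (natDegree_sub_le _ _) (max_le ?_ ?_)
    · refine le_trans natDegree_mul_le ?_
      have := hlin (γ ^ c)
      omega
    · refine le_trans (Polynomial.natDegree_prod_le _ _) ?_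
      calc ∑ s : Fin c, ((C (γ ^ (s : ℕ)) * X - C β) ^ k).natDegree
          ≤ ∑ _s : Fin c, k := by
            refine Finset.sum_le_sum fun s _ => ?_
            refine le_trans Polynomial.natDegree_pow_le ?_
            calc k * (C (γ ^ (s : ℕ)) * X - C β).natDegree ≤ k * 1 :=
              Nat.mul_le_mul_left _ (hlin _)
            _ = k := by omega
        _ = c * k := by simp [mul_comm]
        _ ≤ c * k + 1 := Nat.le_succ _
  have hγc : (γ : Fq) ^ c ≠ 0 := pow_ne_zero _ hγ0
  -- G ≠ 0
  have hGne : G ≠ 0 := by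
    intro h0
    have hy0 : G.eval (β * (γ ^ c)⁻¹) = 0 := by rw [h0]; simp
    rw [hG] at hy0
    simp only [eval_sub, eval_mul, eval_C, eval_X, eval_prod, eval_pow] at hy0
    have hc0 : γ ^ c * (β * (γ ^ c)⁻¹) - β = 0 := by
      field_simp
      ring
    rw [hc0, zero_mul, zero_sub, neg_eq_zero] at hy0
    have hfac : ∀ s : Fin c, (γ ^ (s : ℕ) * (β * (γ ^ c)⁻¹) - β) ^ k ≠ 0 := by
      intro s
      refine pow_ne_zero _ (sub_ne_zero.2 ?_)
      intro h1
      have h2 : γ ^ (s : ℕ) * β = β * γ ^ c := by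
        calc γ ^ (s : ℕ) * β = γ ^ (s : ℕ) * (β * (γ ^ c)⁻¹) * γ ^ c := by
              field_simp
          _ = β * γ ^ c := by rw [h1]
      have h3 : γ ^ (s : ℕ) = γ ^ c :=
        mul_right_cancel₀ hβ (by linear_combination h2)
      exact absurd (pow_inj' γ t hγt hγ0 (lt_trans s.2 hct) hct h3) (by omega)
    exact Finset.prod_ne_zero_iff.2 (fun s _ => hfac s) hy0
  -- every α j * γ ^ i with i < L is a root of G
  have hroot : ∀ j : Fin m, ∀ i : ℕ, i < L → G.eval (α j * γ ^ i) = 0 := by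
    intro j i hiL
    have hicn : i + c < n := by omega
    set y : Fq := α j * γ ^ i with hy
    have hDexp : ∀ s : ℕ, α j * γ ^ (i + s) - β = γ ^ s * y - β := by
      intro s
      rw [hy, pow_add]; ring
    have hD : ∀ s : ℕ, γ ^ s * y - β ≠ 0 := by
      intro s
      rw [← hDexp s]
      exact hne' γ t hγt hγ0 α β hcoset j (i + s)
    have hPval : P.eval y =
        (∏ s : Fin c, (γ ^ (s : ℕ) * y - β) ^ k) *
          MvPolynomial.eval (fun s : Fin c => (γ ^ (s : ℕ) * y - β)⁻¹) f := by
      rw [hP, eval_finset_sum, MvPolynomial.eval_eq', Finset.mul_sum]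
      refine Finset.sum_congr rfl fun e he => ?_
      simp only [eval_mul, eval_C, eval_prod, eval_pow, eval_sub, eval_X]
      rw [mul_left_comm]
      congr 1
      rw [← Finset.prod_mul_distrib]
      refine Finset.prod_congr rfl fun s _ => ?_
      have hesk : e s ≤ k := by
        have h4 := hdeg s
        rw [MvPolynomial.degreeOf_eq_sup] at h4
        exact le_trans (Finset.le_sup (f := fun m => m s) he) h4
      rw [pow_sub₀ _ (hD (s : ℕ)) hesk, inv_pow]
    have hrecj := hrec j i hicn
    simp only at hrecj
    have huval : (fun s : Fin c => (α j * γ ^ (i + (s : ℕ)) - β) ^ (q - 2)) =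
        (fun s : Fin c => (γ ^ (s : ℕ) * y - β)⁻¹) := by
      funext s
      rw [hDexp (s : ℕ)]
      exact pow_q2_eq_inv q hq hq3 (hD (s : ℕ))
    have hZc : (γ ^ c * y - β)⁻¹ =
        MvPolynomial.eval (fun s : Fin c => (γ ^ (s : ℕ) * y - β)⁻¹) f := by
      rw [← huval, ← hrecj, hDexp c]
      exact (pow_q2_eq_inv q hq hq3 (hD c)).symm
    rw [hG]
    simp only [eval_sub, eval_mul, eval_C, eval_X, eval_prod, eval_pow]
    rw [hPval, ← hZc,
      mul_comm (∏ s : Fin c, (γ ^ (s : ℕ) * y - β) ^ k) ((γ ^ c * y - β)⁻¹), ← mul_assoc,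
      mul_inv_cancel₀ (hD c), one_mul, sub_self]
  -- the points α j * γ ^ i, i < L, are pairwise distinct
  have key : ∀ (j1 j2 : Fin m) (i1 i2 : ℕ), i1 < L → i2 < L → i1 ≤ i2 →
      α j1 * γ ^ i1 = α j2 * γ ^ i2 → j1 = j2 ∧ i1 = i2 := by
    intro j1 j2 i1 i2 hi1 hi2 hle he
    set b := i2 - i1 with hb
    have h1 : α j1 * γ ^ i1 = α j2 * γ ^ b * γ ^ i1 := by
      rw [he, mul_assoc, ← pow_add]
      congr 2
      omega
    have h2 : α j1 = α j2 * γ ^ b := mul_right_cancel₀ (pow_ne_zero i1 hγ0) h1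
    rcases Nat.eq_zero_or_pos b with hb0 | hbpos
    · rw [hb0, pow_zero, mul_one] at h2
      exact ⟨hαinj h2, by omega⟩
    · exfalso
      have hbL : b < L := by omega
      by_cases hj : j1 = j2
      · subst hj
        have h3 : α j1 * γ ^ b = α j1 * 1 := by rw [mul_one, ← h2]
        have h4 : γ ^ b = 1 := mul_left_cancel₀ (hα0 j1) h3
        have h5 : t ∣ b := hγt ▸ orderOf_dvd_of_pow_eq_one h4
        exact absurd (Nat.le_of_dvd hbpos h5) (by omega)
      · have h3 : α j1 * (α j2)⁻¹ = γ ^ b := by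
          rw [h2]
          field_simp [hα0 j2]
        have h4 : normT γ t (α j1 * (α j2)⁻¹) ≤ b :=
          normT_le_of_eq_pow (by omega) h3
        have h5 : δ ≤ normT γ t (α j1 * (α j2)⁻¹) :=
          Nat.sInf_le ⟨j1, j2, hj, rfl⟩
        omega
  set S : Finset Fq :=
    (Finset.univ ×ˢ Finset.range L).image (fun p : Fin m × ℕ => α p.1 * γ ^ p.2) with hS
  have hScard : S.card = m * L := by
    rw [hS, Finset.card_image_of_injOn, Finset.card_product, Finset.card_univ,
      Fintype.card_fin, Finset.card_range]
    intro p1 hp1 p2 hp2 heq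
    simp only [Finset.coe_product, Set.mem_prod, Finset.mem_coe, Finset.mem_range,
      Finset.mem_univ, true_and] at hp1 hp2
    simp only at heq
    rcases le_total p1.2 p2.2 with hle | hle
    · obtain ⟨h1, h2⟩ := key p1.1 p2.1 p1.2 p2.2 hp1 hp2 hle heq
      exact Prod.ext h1 h2
    · obtain ⟨h1, h2⟩ := key p2.1 p1.1 p2.2 p1.2 hp2 hp1 hle heq.symm
      exact Prod.ext h1.symm h2.symm
  have hsub : S ⊆ G.roots.toFinset := by
    intro y hy
    rw [hS, Finset.mem_image] at hy
    obtain ⟨p, hp, rfl⟩ := hy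
    simp only [Finset.mem_product, Finset.mem_univ, Finset.mem_range, true_and] at hp
    rw [Multiset.mem_toFinset, mem_roots']
    exact ⟨hGne, hroot p.1 p.2 hp⟩
  calc m * L = S.card := hScard.symm
    _ ≤ G.roots.toFinset.card := Finset.card_le_card hsub
    _ ≤ Multiset.card G.roots := Multiset.toFinset_card_le _
    _ ≤ G.natDegree := Polynomial.card_roots' G
    _ ≤ c * k + 1 := hGdeg

end Aux

/-- Corollary: if moreover `t < q−1`, each `α_j ∉ β⟨γ⟩`, and
`2 ≤ m ≤ q−1−t`, then
`N_k^(m)(Z,n) ≥ min( (mn−1)/(m+k), (δ_t m − 1)/k, t )`. -/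
theorem jointNLC_inversive_period_t_lower_bound_coset
    {Fq : Type*} [Field Fq] [Fintype Fq] (q : ℕ) (hq : q = Fintype.card Fq)
    (hq3 : 3 ≤ q) {m : ℕ} (hm2 : 2 ≤ m)
    (γ : Fq) (t : ℕ) (hγt : orderOf γ = t) (hγ0 : γ ≠ 0) (htq : t < q - 1)
    (hmq : m ≤ q - 1 - t)
    (α : Fin m → Fq) (hα0 : ∀ j, α j ≠ 0) (hαinj : Function.Injective α)
    (β : Fq) (hβ : β ≠ 0)
    (hcoset : ∀ j : Fin m, ∀ i : ℕ, α j ≠ β * γ ^ i)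
    (k n : ℕ) (hk1 : 1 ≤ k) (hkq : k ≤ q - 1) (hn : 1 ≤ n) :
    (jointNLC (fun (j : Fin m) (i : ℕ) => (α j * γ ^ i - β) ^ (q - 2)) k n : ℝ)
      ≥ min (min (((m : ℝ) * n - 1) / ((m : ℝ) + k))
              (((deltaT γ t α : ℝ) * m - 1) / (k : ℝ)))
          (t : ℝ) := by
  classical
  set Z : Fin m → ℕ → Fq := fun j i => (α j * γ ^ i - β) ^ (q - 2) with hZ
  set δ := deltaT γ t α with hδ
  -- the sequence is not identically zero on the first n terms
  have hnz : ¬ ∀ j : Fin m, ∀ i : ℕ, i < n → Z j i = 0 := by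
    intro h
    have h0 := h ⟨0, by omega⟩ 0 (by omega)
    exact pow_ne_zero _ (hne' γ t hγt hγ0 α β hcoset ⟨0, by omega⟩ 0) h0
  have hNdef : jointNLC Z k n = sInf {c : ℕ | SatisfiesNLRecursion Z k n c} := by
    rw [jointNLC, if_neg hnz]
  set N := jointNLC Z k n with hN
  have hmemn : n ∈ {c : ℕ | SatisfiesNLRecursion Z k n c} :=
    ⟨0, fun s => by simp, fun j i h => absurd h (by omega)⟩
  have hNmem : SatisfiesNLRecursion Z k n N := by
    rw [hNdef]
    exact Nat.sInf_mem ⟨n, hmemn⟩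
  have hNn : N ≤ n := by
    rw [hNdef]
    exact Nat.sInf_le hmemn
  rw [ge_iff_le]
  rcases le_or_gt t N with htN | hNt
  · calc min (min (((m : ℝ) * n - 1) / ((m : ℝ) + k)) (((δ : ℝ) * m - 1) / (k : ℝ))) (t : ℝ)
        ≤ (t : ℝ) := min_le_right _ _
      _ ≤ (N : ℝ) := by exact_mod_cast htN
  · have hcore : m * min (n - N) δ ≤ N * k + 1 :=
      core_bound q hq hq3 hm2 γ t hγt hγ0 α hα0 hαinj β hβ hcoset k n N hNt hNmem
    rcases le_or_gt (n - N) δ with hcase | hcase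
    · have h1 : m * (n - N) ≤ N * k + 1 := by
        rwa [min_eq_left hcase] at hcore
      have h2 : m * n ≤ N * k + 1 + m * N := by
        have hn' : n - N + N = n := by omega
        calc m * n = m * (n - N) + m * N := by rw [← Nat.mul_add, hn']
          _ ≤ N * k + 1 + m * N := by omega
      have h2' : ((m : ℝ) * n : ℝ) ≤ (N : ℝ) * k + 1 + m * N := by
        exact_mod_cast h2
      have hmk : (0 : ℝ) < (m : ℝ) + k := by
        have : (2 : ℝ) ≤ (m : ℝ) := by exact_mod_cast hm2
        have : (0 : ℝ) ≤ (k : ℝ) := Nat.cast_nonneg k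
        linarith
      have hA : ((m : ℝ) * n - 1) / ((m : ℝ) + k) ≤ (N : ℝ) := by
        rw [div_le_iff₀ hmk]
        nlinarith
      calc min (min (((m : ℝ) * n - 1) / ((m : ℝ) + k)) (((δ : ℝ) * m - 1) / (k : ℝ))) (t : ℝ)
          ≤ ((m : ℝ) * n - 1) / ((m : ℝ) + k) :=
            le_trans (min_le_left _ _) (min_le_left _ _)
        _ ≤ (N : ℝ) := hA
    · have h1 : m * δ ≤ N * k + 1 := by
        rwa [min_eq_right hcase.le] at hcore
      have h1' : ((m : ℝ) * δ : ℝ) ≤ (N : ℝ) * k + 1 := by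
        exact_mod_cast h1
      have hkpos : (0 : ℝ) < (k : ℝ) := by exact_mod_cast hk1
      have hB : ((δ : ℝ) * m - 1) / (k : ℝ) ≤ (N : ℝ) := by
        rw [div_le_iff₀ hkpos]
        nlinarith
      calc min (min (((m : ℝ) * n - 1) / ((m : ℝ) + k)) (((δ : ℝ) * m - 1) / (k : ℝ))) (t : ℝ)
          ≤ ((δ : ℝ) * m - 1) / (k : ℝ) :=
            le_trans (min_le_left _ _) (min_le_right _ _)
        _ ≤ (N : ℝ) := hB
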